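/- Let u(t,ρ,z) = log ρ + t/r_c with r_c = sqrt(3/Λ), Λ > 0, and let g_dS be the 2+1 Lorentzian metric g_dS = -e^{2t/r_c} ρ² dt² + ρ² e^{4t/r_c}(dρ² + dz²) on the region ρ > 0. Then the covariant wave operator satisfies □_{g_dS} u = -Λ e^{-2u}, i.e., u solves the Liouville wave equation □_g u + Λ e^{-2u} = 0. -/

import Mathlib

open Real

/-- Partial derivative in the `i`-th coordinate direction on `ℝ³ = Fin 3 → ℝ`. -/
noncomputable def pd (i : Fin 3) (f : (Fin 3 → ℝ) → ℝ) (x : Fin 3 → ℝ) : ℝ :=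
  fderiv ℝ f x (Pi.single i 1)

/-- Covariant wave operator in divergence form:
`□ u = (1/√(-g)) ∂_ν (√(-g) g^{μν} ∂_μ u)`, where `s = √(-det g)` and `ginv` is the
inverse metric. -/
noncomputable def waveOp (s : (Fin 3 → ℝ) → ℝ) (ginv : Fin 3 → Fin 3 → (Fin 3 → ℝ) → ℝ)
    (u : (Fin 3 → ℝ) → ℝ) (x : Fin 3 → ℝ) : ℝ :=
  (1 / s x) * ∑ ν : Fin 3, pd ν (fun y => s y * ∑ μ : Fin 3, ginv μ ν y * pd μ u y) x

lemma proj_hasFDerivAt (i : Fin 3) (x : Fin 3 → ℝ) :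
    HasFDerivAt (fun v : Fin 3 → ℝ => v i)
      (ContinuousLinearMap.proj i : (Fin 3 → ℝ) →L[ℝ] ℝ) x :=
  (ContinuousLinearMap.proj i : (Fin 3 → ℝ) →L[ℝ] ℝ).hasFDerivAt

/-- Partial derivatives of `u = log ρ + t/rc`. -/
lemma pd_u (rc : ℝ) (y : Fin 3 → ℝ) (hy : 0 < y 1) (i : Fin 3) :
    pd i (fun v => Real.log (v 1) + v 0 / rc) y
      = (y 1)⁻¹ * (Pi.single i 1 : Fin 3 → ℝ) 1 + rc⁻¹ * (Pi.single i 1 : Fin 3 → ℝ) 0 := by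
  have hlog := (Real.hasDerivAt_log hy.ne').comp_hasFDerivAt y (proj_hasFDerivAt 1 y)
  have ht : HasFDerivAt (fun v : Fin 3 → ℝ => v 0 / rc)
      (rc⁻¹ • (ContinuousLinearMap.proj 0 : (Fin 3 → ℝ) →L[ℝ] ℝ)) y := by
    simpa [div_eq_mul_inv, smul_comm, mul_comm] using (proj_hasFDerivAt 0 y).mul_const rc⁻¹
  have hU : HasFDerivAt (fun v : Fin 3 → ℝ => Real.log (v 1) + v 0 / rc)
      ((y 1)⁻¹ • (ContinuousLinearMap.proj 1 : (Fin 3 → ℝ) →L[ℝ] ℝ)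
        + rc⁻¹ • (ContinuousLinearMap.proj 0 : (Fin 3 → ℝ) →L[ℝ] ℝ)) y := hlog.add ht
  rw [pd, hU.fderiv]
  simp

lemma pd_flux0 (rc : ℝ) (x : Fin 3 → ℝ) :
    pd 0 (fun v : Fin 3 → ℝ => -(v 1 * Real.exp (3 * v 0 / rc)) / rc) x
      = -(x 1 * (Real.exp (3 * x 0 / rc) * (3 / rc))) / rc := by
  have hin : HasFDerivAt (fun v : Fin 3 → ℝ => 3 * v 0 / rc)
      ((3 / rc) • (ContinuousLinearMap.proj 0 : (Fin 3 → ℝ) →L[ℝ] ℝ)) x := by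
    simpa [div_eq_mul_inv, mul_comm, mul_assoc, smul_smul] using
      (((proj_hasFDerivAt 0 x).const_mul 3).mul_const rc⁻¹)
  have hexp : HasFDerivAt (fun v : Fin 3 → ℝ => Real.exp (3 * v 0 / rc))
      (Real.exp (3 * x 0 / rc) • (3 / rc)
        • (ContinuousLinearMap.proj 0 : (Fin 3 → ℝ) →L[ℝ] ℝ)) x :=
    by have h := (Real.hasDerivAt_exp (3 * x 0 / rc)).comp_hasFDerivAt x hin; exact h
  have hE := (((proj_hasFDerivAt 1 x).mul hexp).neg).mul_const rc⁻¹
  have hfe : (fun v : Fin 3 → ℝ => -(v 1 * Real.exp (3 * v 0 / rc)) / rc)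
      = fun v : Fin 3 → ℝ => -(v 1 * Real.exp (3 * v 0 / rc)) * rc⁻¹ := by
    funext v; rw [div_eq_mul_inv]
  rw [pd, hfe, HasFDerivAt.fderiv (f := fun v : Fin 3 → ℝ => -(v 1 * Real.exp (3 * v 0 / rc)) * rc⁻¹) hE]
  simp [smul_smul]
  ring

lemma pd_congr {f g : (Fin 3 → ℝ) → ℝ} {x : Fin 3 → ℝ} (i : Fin 3)
    (h : f =ᶠ[nhds x] g) : pd i f x = pd i g x := by
  unfold pd; rw [h.fderiv_eq]

lemma pd_flux1 (rc : ℝ) (x : Fin 3 → ℝ) :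
    pd 1 (fun v : Fin 3 → ℝ => Real.exp (v 0 / rc)) x = 0 := by
  have hin : HasFDerivAt (fun v : Fin 3 → ℝ => v 0 / rc)
      (rc⁻¹ • (ContinuousLinearMap.proj 0 : (Fin 3 → ℝ) →L[ℝ] ℝ)) x := by
    simpa [div_eq_mul_inv, smul_comm, mul_comm] using (proj_hasFDerivAt 0 x).mul_const rc⁻¹
  have hexp : HasFDerivAt (fun v : Fin 3 → ℝ => Real.exp (v 0 / rc))
      (Real.exp (x 0 / rc) • rc⁻¹
        • (ContinuousLinearMap.proj 0 : (Fin 3 → ℝ) →L[ℝ] ℝ)) x :=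
    by have h := (Real.hasDerivAt_exp (x 0 / rc)).comp_hasFDerivAt x hin; exact h
  rw [pd, hexp.fderiv]
  simp

/-- coordinates `x = (t, ρ, z)`, `u = log ρ + t/r_c`, `r_c = √(3/Λ)`,
de Sitter 2+1 metric `g = -e^{2t/r_c} ρ² dt² + ρ² e^{4t/r_c}(dρ² + dz²)`,
with `√(-g) = ρ³ e^{5t/r_c}`, inverse metric `g^{tt} = -ρ⁻² e^{-2t/r_c}`,
`g^{ρρ} = g^{zz} = ρ⁻² e^{-4t/r_c}`. Then `□_g u = -Λ e^{-2u}` on `ρ > 0`. -/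
theorem liouville_wave_deSitter (Λ : ℝ) (hΛ : 0 < Λ) (rc : ℝ) (hrc : rc = Real.sqrt (3 / Λ))
    (u s : (Fin 3 → ℝ) → ℝ) (ginv : Fin 3 → Fin 3 → (Fin 3 → ℝ) → ℝ)
    (hu : ∀ x, u x = Real.log (x 1) + x 0 / rc)
    (hs : ∀ x, s x = (x 1) ^ 3 * Real.exp (5 * x 0 / rc))
    (h00 : ∀ x, ginv 0 0 x = -(1 / (x 1) ^ 2) * Real.exp (-(2 * x 0) / rc))
    (h11 : ∀ x, ginv 1 1 x = (1 / (x 1) ^ 2) * Real.exp (-(4 * x 0) / rc))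
    (h22 : ∀ x, ginv 2 2 x = (1 / (x 1) ^ 2) * Real.exp (-(4 * x 0) / rc))
    (hoff : ∀ (i j : Fin 3) x, i ≠ j → ginv i j x = 0) :
    ∀ x : Fin 3 → ℝ, 0 < x 1 →
      waveOp s ginv u x = -Λ * Real.exp (-2 * u x) := by
  intro x hx
  have hufun : u = fun v => Real.log (v 1) + v 0 / rc := funext hu
  -- basic facts about rc
  have h3Λ : (0:ℝ) < 3 / Λ := by positivity
  have hrcpos : 0 < rc := by rw [hrc]; exact Real.sqrt_pos.2 h3Λ
  have hrcne : rc ≠ 0 := hrcpos.ne'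
  have hrcsq : rc ^ 2 = 3 / Λ := by rw [hrc, sq_sqrt h3Λ.le]
  -- the open set where ρ > 0
  have hmem : {y : Fin 3 → ℝ | 0 < y 1} ∈ nhds x :=
    ((isOpen_Ioi.preimage (continuous_apply 1)).mem_nhds hx)
  -- eventual equality of the three flux functions
  have heq0 : (fun y => s y * ∑ μ : Fin 3, ginv μ 0 y * pd μ u y)
      =ᶠ[nhds x] (fun v : Fin 3 → ℝ => -(v 1 * Real.exp (3 * v 0 / rc)) / rc) := by
    filter_upwards [hmem] with y hy
    have hy' : (0:ℝ) < y 1 := hy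
    rw [hufun]
    rw [Fin.sum_univ_three, hoff 1 0 y (by decide), hoff 2 0 y (by decide),
      pd_u rc y hy' 0, hs, h00]
    have he : Real.exp (5 * y 0 / rc) * Real.exp (-(2 * y 0) / rc)
        = Real.exp (3 * y 0 / rc) := by
      rw [← Real.exp_add]; ring_nf
    simp only [Pi.single_eq_same, Pi.single_eq_of_ne (by decide : (1:Fin 3) ≠ 0)]
    field_simp
    linear_combination (norm := ring_nf) (-(y 1)) * he
  have heq1 : (fun y => s y * ∑ μ : Fin 3, ginv μ 1 y * pd μ u y)
      =ᶠ[nhds x] (fun v : Fin 3 → ℝ => Real.exp (v 0 / rc)) := by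
    filter_upwards [hmem] with y hy
    have hy' : (0:ℝ) < y 1 := hy
    rw [hufun]
    rw [Fin.sum_univ_three, hoff 0 1 y (by decide), hoff 2 1 y (by decide),
      pd_u rc y hy' 1, hs, h11]
    have he : Real.exp (5 * y 0 / rc) * Real.exp (-(4 * y 0) / rc)
        = Real.exp (y 0 / rc) := by
      rw [← Real.exp_add]; ring_nf
    simp only [Pi.single_eq_same, Pi.single_eq_of_ne (by decide : (0:Fin 3) ≠ 1)]
    field_simp
    linear_combination (norm := ring_nf) rc * he
  have heq2 : (fun y => s y * ∑ μ : Fin 3, ginv μ 2 y * pd μ u y)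
      =ᶠ[nhds x] (fun _ : Fin 3 → ℝ => (0:ℝ)) := by
    filter_upwards [hmem] with y hy
    have hy' : (0:ℝ) < y 1 := hy
    rw [hufun]
    rw [Fin.sum_univ_three, hoff 0 2 y (by decide), hoff 1 2 y (by decide),
      pd_u rc y hy' 2]
    simp [Pi.single_eq_of_ne (by decide : (1:Fin 3) ≠ 2),
      Pi.single_eq_of_ne (by decide : (0:Fin 3) ≠ 2)]
  -- compute the wave operator
  rw [waveOp, Fin.sum_univ_three]
  rw [pd_congr 0 heq0, pd_congr 1 heq1, pd_congr 2 heq2]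
  rw [pd_flux0, pd_flux1, hs, hu]
  have hpd2 : pd 2 (fun _ : Fin 3 → ℝ => (0:ℝ)) x = 0 := by
    simp [pd]
  rw [hpd2]
  -- final arithmetic
  have hΛrc : Λ = 3 / rc ^ 2 := by
    rw [hrcsq]; field_simp
  have hexpu : Real.exp (-2 * (Real.log (x 1) + x 0 / rc))
      = (x 1)⁻¹ ^ 2 * Real.exp (-(2 * x 0) / rc) := by
    rw [show -2 * (Real.log (x 1) + x 0 / rc)
        = (-(Real.log (x 1)) + -(Real.log (x 1))) + -(2 * x 0) / rc by ring,
      Real.exp_add, Real.exp_add, Real.exp_neg, Real.exp_log hx]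
    ring
  rw [hexpu]
  have he : Real.exp (3 * x 0 / rc)
      = Real.exp (5 * x 0 / rc) * Real.exp (-(2 * x 0) / rc) := by
    rw [← Real.exp_add]; congr 1; ring
  rw [hΛrc]
  have hx1 := hx.ne'
  field_simp
  linear_combination (norm := ring_nf) (-(3 * x 1)) * he
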